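/- Let θ₀ > 0 and set k = θ₀ A and δ = A γ. For the constant transmission rate θ(x) ≡ θ₀ and the linear population p(x) = N₀(1 - x/A) with N = N₀ A / 2, the basic reproductive number satisfies R₀ = (2θ₀/A) ∫₀^A (1 - x/A) e^{-γx} (∫₀^x e^{γs} ds) dx = (k/δ³) [(δ - 1)² + 1 - 2 e^{-δ}]. -/

import Mathlib

open MeasureTheory Real Set Filter

/-- `Λ(x,s) = ∫_s^x θ(t) dt`. -/
noncomputable def Lam (θ : ℝ → ℝ) (x s : ℝ) : ℝ := ∫ t in s..x, θ t

/-- `w(x;Q) = Q e^{-γx} ∫₀^x e^{γs} θ(s) e^{-Q Λ(x,s)} ds`. -/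
noncomputable def w (γ : ℝ) (θ : ℝ → ℝ) (Q x : ℝ) : ℝ :=
  Q * Real.exp (-γ * x) * ∫ s in (0:ℝ)..x, Real.exp (γ * s) * θ s * Real.exp (-Q * Lam θ x s)
/-- The kernel `k(x,s) = (p(x)/N)·θ(s)·e^{-γ(x-s)}`. -/
noncomputable def kker (γ N : ℝ) (p θ : ℝ → ℝ) (x s : ℝ) : ℝ :=
  (p x / N) * θ s * Real.exp (-γ * (x - s))

/-- The triangle `Ω = {(x,s) : 0 ≤ s ≤ x ≤ A}` (first coordinate `x`, second `s`). -/
def Tri (A : ℝ) : Set (ℝ × ℝ) := {q | 0 ≤ q.2 ∧ q.2 ≤ q.1 ∧ q.1 ≤ A}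

/-- Basic reproductive number `R₀ = ∬_Ω k(x,s) d(s,x)`. -/
noncomputable def R0 (γ N A : ℝ) (p θ : ℝ → ℝ) : ℝ :=
  ∫ q in Tri A, kker γ N p θ q.1 q.2

/-- `F(Q) = 1 - ∬_Ω k(x,s) e^{-Q Λ(x,s)} d(s,x)`. -/
noncomputable def FF (γ N A : ℝ) (p θ : ℝ → ℝ) (Q : ℝ) : ℝ :=
  1 - ∫ q in Tri A, kker γ N p θ q.1 q.2 * Real.exp (-Q * Lam θ q.1 q.2)

/-- Iteration map `T(Q) = Q·(1 - F(Q))`. -/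
noncomputable def TT (γ N A : ℝ) (p θ : ℝ → ℝ) (Q : ℝ) : ℝ :=
  Q * (1 - FF γ N A p θ Q)

lemma integral_tri (A : ℝ) (hA : 0 ≤ A) (f : ℝ → ℝ → ℝ)
    (hf : Continuous fun q : ℝ × ℝ => f q.1 q.2) :
    ∫ q in Tri A, f q.1 q.2 = ∫ x in (0:ℝ)..A, ∫ s in (0:ℝ)..x, f x s := by
  have hTc : IsClosed (Tri A) := by
    have h1 : IsClosed {q : ℝ × ℝ | 0 ≤ q.2} := isClosed_le continuous_const continuous_snd
    have h2 : IsClosed {q : ℝ × ℝ | q.2 ≤ q.1} := isClosed_le continuous_snd continuous_fst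
    have h3 : IsClosed {q : ℝ × ℝ | q.1 ≤ A} := isClosed_le continuous_fst continuous_const
    exact (h1.inter (h2.inter h3))
  have hmeas : MeasurableSet (Tri A) := hTc.measurableSet
  have hsub : Tri A ⊆ Icc ((0:ℝ),(0:ℝ)) (A,A) := by
    rintro q ⟨h1, h2, h3⟩
    exact ⟨⟨h1.trans h2, h1⟩, ⟨h3, h2.trans h3⟩⟩
  have hcomp : IsCompact (Tri A) := isCompact_Icc.of_isClosed_subset hTc hsub
  have hint : IntegrableOn (fun q : ℝ × ℝ => f q.1 q.2) (Tri A) :=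
    hf.continuousOn.integrableOn_compact hcomp
  have hind : Integrable ((Tri A).indicator fun q : ℝ × ℝ => f q.1 q.2) :=
    (integrable_indicator_iff hmeas).2 hint
  rw [← integral_indicator hmeas]
  rw [Measure.volume_eq_prod] at hind ⊢
  rw [integral_prod _ hind]
  have inner : ∀ x : ℝ, (∫ s, (Tri A).indicator (fun q : ℝ × ℝ => f q.1 q.2) (x, s))
      = (Icc (0:ℝ) A).indicator (fun x => ∫ s in (0:ℝ)..x, f x s) x := by
    intro x
    by_cases hx : x ∈ Icc (0:ℝ) A
    · rw [indicator_of_mem hx]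
      have : ∀ s, (Tri A).indicator (fun q : ℝ × ℝ => f q.1 q.2) (x, s)
          = (Icc (0:ℝ) x).indicator (fun s => f x s) s := by
        intro s
        by_cases hs : s ∈ Icc (0:ℝ) x
        · rw [indicator_of_mem hs, indicator_of_mem]
          exact ⟨hs.1, hs.2, hx.2⟩
        · rw [indicator_of_notMem hs, indicator_of_notMem]
          intro ⟨a, b, c⟩; exact hs ⟨a, b⟩
      simp_rw [this]
      rw [integral_indicator measurableSet_Icc, integral_Icc_eq_integral_Ioc,
        ← intervalIntegral.integral_of_le hx.1]
    · rw [indicator_of_notMem hx]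
      have : ∀ s, (Tri A).indicator (fun q : ℝ × ℝ => f q.1 q.2) (x, s) = 0 := by
        intro s
        apply indicator_of_notMem
        intro ⟨a, b, c⟩
        exact hx ⟨a.trans b, c⟩
      simp_rw [this, integral_zero]
  simp_rw [inner]
  rw [integral_indicator measurableSet_Icc, integral_Icc_eq_integral_Ioc,
    ← intervalIntegral.integral_of_le hA]

lemma exp_int (γ : ℝ) (hγ : γ ≠ 0) (x : ℝ) :
    ∫ s in (0:ℝ)..x, Real.exp (γ * s) = (Real.exp (γ * x) - 1) / γ := by
  have : ∀ s ∈ Set.uIcc (0:ℝ) x, HasDerivAt (fun s => Real.exp (γ * s) / γ)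
      (Real.exp (γ * s)) s := by
    intro s _
    have h1 : HasDerivAt (fun s : ℝ => γ * s) γ s := by
      simpa using (hasDerivAt_id s).const_mul γ
    have := (h1.exp).div_const γ
    simpa [mul_comm, mul_div_assoc, mul_div_cancel_left₀ _ hγ] using this
  rw [intervalIntegral.integral_eq_sub_of_hasDerivAt this]
  · simp [sub_div]
  · exact (Real.continuous_exp.comp (continuous_const.mul continuous_id)).intervalIntegrable 0 x

lemma outer_int (γ A : ℝ) (hγ : 0 < γ) (hA : 0 < A) :
    ∫ x in (0:ℝ)..A, (1 - x / A) * ((1 - Real.exp (-γ * x)) / γ)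
      = A / (2*γ) - 1/γ^2 + 1/(A*γ^3) - Real.exp (-(A*γ)) / (A*γ^3) := by
  have hγ' : γ ≠ 0 := hγ.ne'
  have hA' : A ≠ 0 := hA.ne'
  have key : ∀ x ∈ Set.uIcc (0:ℝ) A,
      HasDerivAt (fun x => (1/γ) * (x - x^2/(2*A) + Real.exp (-γ*x)/γ
        - (x/(A*γ) + 1/(A*γ^2)) * Real.exp (-γ*x)))
      ((1 - x / A) * ((1 - Real.exp (-γ * x)) / γ)) x := by
    intro x _
    have he : HasDerivAt (fun x : ℝ => Real.exp (-γ * x)) (-γ * Real.exp (-γ * x)) x := by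
      have h1 : HasDerivAt (fun x : ℝ => -γ * x) (-γ) x := by
        simpa using (hasDerivAt_id x).const_mul (-γ)
      simpa [mul_comm] using h1.exp
    have h1 : HasDerivAt (fun x : ℝ => x - x^2/(2*A)) (1 - 2*x/(2*A)) x := by
      have := ((hasDerivAt_pow 2 x).div_const (2*A))
      simpa [pow_one] using (hasDerivAt_id' x).fun_sub this
    have h2 := he.div_const γ
    have h3 : HasDerivAt (fun x : ℝ => x/(A*γ) + 1/(A*γ^2)) (1/(A*γ)) x := by
      have h := ((hasDerivAt_id x).div_const (A*γ)).add_const (1/(A*γ^2))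
      simpa using h
    have h4 := (h3.mul he)
    have := (((h1.add h2).sub h4).const_mul (1/γ))
    refine this.congr_deriv ?_
    field_simp
    ring
  rw [intervalIntegral.integral_eq_sub_of_hasDerivAt key]
  · have h0 : Real.exp (-γ * 0) = 1 := by norm_num
    have hAe : Real.exp (-γ * A) = Real.exp (-(A*γ)) := by ring_nf
    rw [h0, hAe]
    field_simp
    ring
  · apply Continuous.intervalIntegrable
    continuity

/-- for constant transmission rate `θ ≡ θ₀` and linear population
`p(x) = N₀(1 - x/A)` with `N = N₀A/2`, the basic reproductive number equals
`(2θ₀/A)∫₀^A (1-x/A)e^{-γx}(∫₀^x e^{γs} ds) dx = (k/δ³)[(δ-1)² + 1 - 2e^{-δ}]`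
with `k = θ₀A`, `δ = Aγ`. -/
theorem R0_simplified (γ A N₀ θ₀ : ℝ) (hγ : 0 < γ) (hA : 0 < A) (hN₀ : 0 < N₀)
    (hθ₀ : 0 < θ₀) :
    R0 γ (N₀ * A / 2) A (fun x => N₀ * (1 - x / A)) (fun _ => θ₀)
      = (2 * θ₀ / A) * ∫ x in (0:ℝ)..A,
          (1 - x / A) * Real.exp (-γ * x) * ∫ s in (0:ℝ)..x, Real.exp (γ * s) ∧
    R0 γ (N₀ * A / 2) A (fun x => N₀ * (1 - x / A)) (fun _ => θ₀)
      = (θ₀ * A) / (A * γ)^3 *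
          ((A * γ - 1)^2 + 1 - 2 * Real.exp (-(A * γ))) := by
  have hA' : A ≠ 0 := hA.ne'
  have hγ' : γ ≠ 0 := hγ.ne'
  have hN' : N₀ ≠ 0 := hN₀.ne'
  -- kernel simplification
  have hker : ∀ x s : ℝ, kker γ (N₀ * A / 2) (fun x => N₀ * (1 - x / A)) (fun _ => θ₀) x s
      = (2 * θ₀ / A) * ((1 - x / A) * Real.exp (-γ * x) * Real.exp (γ * s)) := by
    intro x s
    unfold kker
    rw [show -γ * (x - s) = -γ * x + γ * s by ring, Real.exp_add]
    field_simp
  -- step 1: Fubini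
  have hfub : R0 γ (N₀ * A / 2) A (fun x => N₀ * (1 - x / A)) (fun _ => θ₀)
      = ∫ x in (0:ℝ)..A, ∫ s in (0:ℝ)..x,
          (2 * θ₀ / A) * ((1 - x / A) * Real.exp (-γ * x) * Real.exp (γ * s)) := by
    unfold R0
    rw [show (fun q : ℝ × ℝ => kker γ (N₀ * A / 2) (fun x => N₀ * (1 - x / A))
      (fun _ => θ₀) q.1 q.2) = fun q : ℝ × ℝ =>
        (2 * θ₀ / A) * ((1 - q.1 / A) * Real.exp (-γ * q.1) * Real.exp (γ * q.2)) from
      funext fun q => hker q.1 q.2]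
    exact integral_tri A hA.le
      (fun x s => (2 * θ₀ / A) * ((1 - x / A) * Real.exp (-γ * x) * Real.exp (γ * s)))
      (by continuity)
  have hfirst : R0 γ (N₀ * A / 2) A (fun x => N₀ * (1 - x / A)) (fun _ => θ₀)
      = (2 * θ₀ / A) * ∫ x in (0:ℝ)..A,
          (1 - x / A) * Real.exp (-γ * x) * ∫ s in (0:ℝ)..x, Real.exp (γ * s) := by
    have step : ∀ x : ℝ, (∫ s in (0:ℝ)..x,
        (2 * θ₀ / A) * ((1 - x / A) * Real.exp (-γ * x) * Real.exp (γ * s)))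
        = (2 * θ₀ / A) * ((1 - x / A) * Real.exp (-γ * x) *
            ∫ s in (0:ℝ)..x, Real.exp (γ * s)) := by
      intro x
      rw [intervalIntegral.integral_const_mul, intervalIntegral.integral_const_mul]
    rw [hfub]
    simp_rw [step]
    rw [intervalIntegral.integral_const_mul]
  refine ⟨hfirst, ?_⟩
  rw [hfirst]
  have hi : ∀ x : ℝ, (1 - x / A) * Real.exp (-γ * x) * ∫ s in (0:ℝ)..x, Real.exp (γ * s)
      = (1 - x / A) * ((1 - Real.exp (-γ * x)) / γ) := by
    intro x
    rw [exp_int γ hγ' x]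
    have h2 : Real.exp (-(x * γ)) * Real.exp (x * γ) = 1 := by
      rw [← Real.exp_add]; simp
    field_simp
    linear_combination (A - x) * h2
  simp_rw [hi]
  rw [outer_int γ A hγ hA]
  have hE := Real.exp_pos (-(A*γ))
  field_simp
  ring
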